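/- Let n ≥ 1 and σ ∈ C_{2n+1}. Then σ avoids 123 if and only if {σ(n+2), σ(n+3), …, σ(2n+1)} = {1, 2, …, n} and the permutation of S_n given by the sequence σ(n+2), σ(n+3), …, σ(2n+1) avoids 123. (In this case σ(n+1) = n+1 and the values σ(1), …, σ(n) are determined by centrosymmetry.) -/
import Mathlib


/-- The value of the permutation `σ` of `{1,…,N}` (modeled on `Fin N`) at a
1-indexed position `i` (so `pval σ i ∈ {1,…,N}` for `1 ≤ i ≤ N`). -/
def pval {N : ℕ} (σ : Equiv.Perm (Fin N)) (i : ℕ) : ℕ :=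
  if h : i - 1 < N then ((σ ⟨i - 1, h⟩ : ℕ) + 1) else 0

/-- `σ` is centrosymmetric: `σ(i) + σ(N+1−i) = N+1` for all `1 ≤ i ≤ N`. -/
def IsCentro {N : ℕ} (σ : Equiv.Perm (Fin N)) : Prop :=
  ∀ i, 1 ≤ i → i ≤ N → pval σ i + pval σ (N + 1 - i) = N + 1

/-- `σ` avoids the pattern 132. -/
def Avoids132 {N : ℕ} (σ : Equiv.Perm (Fin N)) : Prop :=
  ¬ ∃ i j k, 1 ≤ i ∧ i < j ∧ j < k ∧ k ≤ N ∧
    pval σ i < pval σ k ∧ pval σ k < pval σ j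

/-- `σ` avoids the pattern 123. -/
def Avoids123 {N : ℕ} (σ : Equiv.Perm (Fin N)) : Prop :=
  ¬ ∃ i j k, 1 ≤ i ∧ i < j ∧ j < k ∧ k ≤ N ∧
    pval σ i < pval σ j ∧ pval σ j < pval σ k

/-- The number of descents of `σ`: positions `1 ≤ i ≤ N−1` with `σ(i) > σ(i+1)`. -/
noncomputable def des {N : ℕ} (σ : Equiv.Perm (Fin N)) : ℕ :=
  Nat.card {i : ℕ // 1 ≤ i ∧ i + 1 ≤ N ∧ pval σ (i + 1) < pval σ i}

lemma pval_eq {N : ℕ} (σ : Equiv.Perm (Fin N)) {i : ℕ} (h2 : i ≤ N) (h1 : 1 ≤ i) :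
    pval σ i = (σ ⟨i - 1, by omega⟩ : ℕ) + 1 := dif_pos _

lemma pval_bnd {N : ℕ} (σ : Equiv.Perm (Fin N)) {i : ℕ} (h1 : 1 ≤ i) (h2 : i ≤ N) :
    1 ≤ pval σ i ∧ pval σ i ≤ N := by
  rw [pval_eq σ h2 h1]
  have := (σ ⟨i - 1, by omega⟩).isLt
  omega

lemma pval_inj {N : ℕ} (σ : Equiv.Perm (Fin N)) {i j : ℕ} (hi1 : 1 ≤ i) (hi2 : i ≤ N)
    (hj1 : 1 ≤ j) (hj2 : j ≤ N) (h : pval σ i = pval σ j) : i = j := by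
  rw [pval_eq σ hi2 hi1, pval_eq σ hj2 hj1] at h
  have h2 : σ ⟨i - 1, by omega⟩ = σ ⟨j - 1, by omega⟩ := Fin.ext (by omega)
  have := Fin.mk.injEq (i - 1) (by omega : i - 1 < N) (j - 1) (by omega)
  have h3 := σ.injective h2
  rw [Fin.mk.injEq] at h3
  omega

/-- a centrosymmetric `σ ∈ S_{2n+1}` avoids 123 iff
`{σ(n+2),…,σ(2n+1)} = {1,…,n}` and the permutation of `S_n` given by the sequence
`σ(n+2),…,σ(2n+1)` avoids 123. -/
theorem stmt18 (n : ℕ) (hn : 1 ≤ n) (σ : Equiv.Perm (Fin (2 * n + 1))) (hσ : IsCentro σ) :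
    Avoids123 σ ↔
      ((Finset.Icc (n + 2) (2 * n + 1)).image (pval σ) = Finset.Icc 1 n) ∧
      (∃ τ : Equiv.Perm (Fin n),
        (∀ i, 1 ≤ i → i ≤ n → pval τ i = pval σ (n + 1 + i)) ∧ Avoids123 τ) := by
  -- the fixed middle value
  have hmid : pval σ (n + 1) = n + 1 := by
    have h := hσ (n + 1) (by omega) (by omega)
    have e : 2 * n + 1 + 1 - (n + 1) = n + 1 := by omega
    rw [e] at h
    omega
  constructor
  · intro hA
    -- values at the last n positions are ≤ n
    have lemA : ∀ p, n + 2 ≤ p → p ≤ 2 * n + 1 → pval σ p ≤ n ∧ 1 ≤ pval σ p := by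
      intro p hp1 hp2
      have hb := pval_bnd σ (show 1 ≤ p by omega) hp2
      refine ⟨?_, hb.1⟩
      by_contra hgt
      push_neg at hgt
      have hne : pval σ p ≠ n + 1 := by
        intro he
        have := pval_inj σ (show 1 ≤ p by omega) hp2 (by omega) (by omega)
          (he.trans hmid.symm)
        omega
      have hge : n + 2 ≤ pval σ p := by omega
      set q := 2 * n + 2 - p with hq
      have hq1 : 1 ≤ q := by omega
      have hq2 : q ≤ n := by omega
      have h := hσ q hq1 (by omega)
      have e : 2 * n + 1 + 1 - q = p := by omega
      rw [e] at h
      exact hA ⟨q, n + 1, p, hq1, by omega, by omega, hp2, by omega, by omega⟩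
    constructor
    · -- image condition
      apply Finset.eq_of_subset_of_card_le
      · intro x hx
        rw [Finset.mem_image] at hx
        obtain ⟨p, hp, rfl⟩ := hx
        rw [Finset.mem_Icc] at hp ⊢
        exact ⟨(lemA p hp.1 hp.2).2, (lemA p hp.1 hp.2).1⟩
      · rw [Finset.card_image_of_injOn, Nat.card_Icc, Nat.card_Icc]
        · omega
        · intro a ha b hb hab
          simp only [Finset.coe_Icc, Set.mem_Icc] at ha hb
          exact pval_inj σ (by omega) ha.2 (by omega) hb.2 hab
    · -- construct τ
      have hbnd : ∀ i : Fin n, pval σ (n + 2 + i) - 1 < n := by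
        intro i
        have := lemA (n + 2 + i) (by omega) (by omega)
        omega
      set f : Fin n → Fin n := fun i => ⟨pval σ (n + 2 + i) - 1, hbnd i⟩ with hf
      have hinj : Function.Injective f := by
        intro a b hab
        rw [hf, Fin.mk.injEq] at hab
        have ha := lemA (n + 2 + a) (by omega) (by omega)
        have hb := lemA (n + 2 + b) (by omega) (by omega)
        have : pval σ (n + 2 + a) = pval σ (n + 2 + b) := by omega
        have := pval_inj σ (show 1 ≤ n + 2 + (a:ℕ) by omega) (by omega)
          (by omega) (by omega) this
        exact Fin.ext (by omega)
      set τ : Equiv.Perm (Fin n) :=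
        Equiv.ofBijective f (Finite.injective_iff_bijective.mp hinj) with hτdef
      have hτv : ∀ i, 1 ≤ i → i ≤ n → pval τ i = pval σ (n + 1 + i) := by
        intro i hi1 hi2
        rw [pval_eq τ hi2 hi1]
        have : τ ⟨i - 1, by omega⟩ = f ⟨i - 1, by omega⟩ := rfl
        rw [this, hf]
        simp only
        have e : n + 2 + (i - 1) = n + 1 + i := by omega
        rw [e]
        have := lemA (n + 1 + i) (by omega) (by omega)
        omega
      refine ⟨τ, hτv, ?_⟩
      rintro ⟨i, j, k, hi, hij, hjk, hk, v1, v2⟩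
      rw [hτv i hi (by omega), hτv j (by omega) (by omega)] at v1
      rw [hτv j (by omega) (by omega), hτv k (by omega) hk] at v2
      exact hA ⟨n + 1 + i, n + 1 + j, n + 1 + k, by omega, by omega, by omega, by omega,
        v1, v2⟩
  · rintro ⟨himg, τ, hτv, hτA⟩
    -- values at the last n positions are in [1, n]
    have hlow : ∀ p, n + 2 ≤ p → p ≤ 2 * n + 1 → 1 ≤ pval σ p ∧ pval σ p ≤ n := by
      intro p hp1 hp2
      have : pval σ p ∈ Finset.Icc 1 n := by
        rw [← himg]
        exact Finset.mem_image_of_mem _ (Finset.mem_Icc.mpr ⟨hp1, hp2⟩)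
      rw [Finset.mem_Icc] at this
      exact this
    -- values at the first n positions are ≥ n + 2
    have hhigh : ∀ p, 1 ≤ p → p ≤ n → n + 2 ≤ pval σ p := by
      intro p hp1 hp2
      have h := hσ p hp1 (by omega)
      have e : 2 * n + 1 + 1 - p = 2 * n + 2 - p := by omega
      rw [e] at h
      have := hlow (2 * n + 2 - p) (by omega) (by omega)
      omega
    -- a 123 pattern fully contained in the last block contradicts hτA
    have key : ∀ a b c, n + 2 ≤ a → a < b → b < c → c ≤ 2 * n + 1 →
        pval σ a < pval σ b → pval σ b < pval σ c → False := by
      intro a b c ha hab hbc hc w1 w2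
      have ea := hτv (a - (n + 1)) (by omega) (by omega)
      have eb := hτv (b - (n + 1)) (by omega) (by omega)
      have ec := hτv (c - (n + 1)) (by omega) (by omega)
      have e1 : n + 1 + (a - (n + 1)) = a := by omega
      have e2 : n + 1 + (b - (n + 1)) = b := by omega
      have e3 : n + 1 + (c - (n + 1)) = c := by omega
      rw [e1] at ea; rw [e2] at eb; rw [e3] at ec
      exact hτA ⟨a - (n + 1), b - (n + 1), c - (n + 1), by omega, by omega, by omega,
        by omega, by rw [ea, eb]; exact w1, by rw [eb, ec]; exact w2⟩
    rintro ⟨i, j, k, hi, hij, hjk, hk, v1, v2⟩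
    by_cases hkn : k ≤ n
    · -- mirror the triple into the last block
      have hi' := hσ i hi (by omega)
      have hj' := hσ j (by omega) (by omega)
      have hk' := hσ k (by omega) (by omega)
      have e1 : 2 * n + 1 + 1 - i = 2 * n + 2 - i := by omega
      have e2 : 2 * n + 1 + 1 - j = 2 * n + 2 - j := by omega
      have e3 : 2 * n + 1 + 1 - k = 2 * n + 2 - k := by omega
      rw [e1] at hi'; rw [e2] at hj'; rw [e3] at hk'
      exact key (2 * n + 2 - k) (2 * n + 2 - j) (2 * n + 2 - i)
        (by omega) (by omega) (by omega) (by omega) (by omega) (by omega)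
    · push_neg at hkn
      by_cases hk1 : k = n + 1
      · -- then pval σ j < n + 1, but j ≤ n so pval σ j ≥ n + 2
        subst hk1
        rw [hmid] at v2
        have := hhigh j (by omega) (by omega)
        omega
      · have hk2 : n + 2 ≤ k := by omega
        have hpk := hlow k hk2 hk
        -- so pval σ j ≤ n - 1, forcing j ≥ n + 2
        have hj2 : n + 2 ≤ j := by
          by_contra hjl
          push_neg at hjl
          rcases Nat.lt_or_ge j (n + 1) with h' | h'
          · have := hhigh j (by omega) (by omega); omega
          · have : j = n + 1 := by omega
            rw [this, hmid] at v2; omega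
        have hi2 : n + 2 ≤ i := by
          by_contra hil
          push_neg at hil
          rcases Nat.lt_or_ge i (n + 1) with h' | h'
          · have := hhigh i (by omega) (by omega); omega
          · have : i = n + 1 := by omega
            rw [this, hmid] at v1
            have := hlow j hj2 (by omega)
            omega
        exact key i j k hi2 hij hjk hk v1 v2
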